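/- The double decomposes as 𝔡 = 𝔤 ∔ 𝔟: for every pair (A,B) of (m+n)×(m+n) complex matrices with Str(A) = Str(B) = 0, there exists a unique (m+n)×(m+n) complex matrix X such that A − X is lower triangular, B − X is upper triangular, and the diagonal of (A − X) plus the diagonal of (B − X) is zero; moreover this X satisfies Str(X) = 0, so (A,B) = (X,X) + (A−X, B−X) with (X,X) ∈ 𝔤 and (A−X, B−X) ∈ 𝔟, and this decomposition is unique. -/

import Mathlib

noncomputable section

/-- The supertrace of an `(m+n)×(m+n)` complex matrix: the first `m` diagonal
entries count with sign `+1`, the last `n` with sign `−1`. -/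
def StrF (m n : ℕ) (M : Matrix (Fin (m + n)) (Fin (m + n)) ℂ) : ℂ :=
  ∑ i : Fin (m + n), (if (i : ℕ) < m then 1 else -1) * M i i

/-- Lower triangular with respect to the total order on the `m+n` indices. -/
def LowerTriF {N : ℕ} (M : Matrix (Fin N) (Fin N) ℂ) : Prop :=
  ∀ i j : Fin N, i < j → M i j = 0

/-- Upper triangular with respect to the total order on the `m+n` indices. -/
def UpperTriF {N : ℕ} (M : Matrix (Fin N) (Fin N) ℂ) : Prop :=
  ∀ i j : Fin N, j < i → M i j = 0

/-- the double decomposes as `𝔡 = 𝔤 ∔ 𝔟`: for every pair `(A,B)` of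
supertraceless matrices there is a unique `X` with `A − X` lower triangular, `B − X`
upper triangular and `diag(A−X) + diag(B−X) = 0`; moreover this `X` is supertraceless,
so `(A,B) = (X,X) + (A−X,B−X)` with `(X,X) ∈ 𝔤`, `(A−X,B−X) ∈ 𝔟`, uniquely. -/
theorem double_decomposition (m n : ℕ)
    (A B : Matrix (Fin (m + n)) (Fin (m + n)) ℂ)
    (hA : StrF m n A = 0) (hB : StrF m n B = 0) :
    (∃! X : Matrix (Fin (m + n)) (Fin (m + n)) ℂ,
      LowerTriF (A - X) ∧ UpperTriF (B - X) ∧ ∀ i, (A - X) i i + (B - X) i i = 0) ∧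
    (∀ X : Matrix (Fin (m + n)) (Fin (m + n)) ℂ,
      (LowerTriF (A - X) ∧ UpperTriF (B - X) ∧ ∀ i, (A - X) i i + (B - X) i i = 0) →
      StrF m n X = 0) := by

  classical
  constructor
  · refine ⟨Matrix.of fun i j => if i < j then A i j else if j < i then B i j else (A i j + B i j)/2,
      ⟨?_, ?_, ?_⟩, ?_⟩
    · intro i j hij
      simp [Matrix.sub_apply, if_pos hij]
    · intro i j hji
      simp [Matrix.sub_apply, if_neg (not_lt.2 hji.le), if_pos hji]
    · intro i
      simp [Matrix.sub_apply, lt_irrefl]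
      ring
    · intro Y ⟨hL, hU, hD⟩
      funext i j
      rcases lt_trichotomy i j with h | h | h
      · have := hL i j h
        simp [Matrix.sub_apply, sub_eq_zero] at this
        simp [if_pos h, this]
      · subst h
        have := hD i
        simp [Matrix.sub_apply, lt_irrefl]
        simp [Matrix.sub_apply] at this
        linear_combination -this/2
      · have := hU i j h
        simp [Matrix.sub_apply, sub_eq_zero] at this
        simp [if_neg (not_lt.2 h.le), if_pos h, this]
  · intro X ⟨hL, hU, hD⟩
    have hX : ∀ i, X i i = (A i i + B i i) / 2 := by
      intro i
      have := hD i
      simp [Matrix.sub_apply] at this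
      linear_combination -this/2
    have : StrF m n X = (StrF m n A + StrF m n B) / 2 := by
      unfold StrF
      rw [← Finset.sum_add_distrib, Finset.sum_div]
      apply Finset.sum_congr rfl
      intro i _
      rw [hX i]
      ring
    rw [this, hA, hB]
    ring
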